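/- Let h₁, h₂ < ω and let f:ℕ→ℕ be monotone. Let 𝓕 and 𝓖 be classes of frames of heights ≤ h₁ and ≤ h₂ respectively, such that every cluster-restriction of every frame in 𝓕 and every cluster-restriction of every frame in 𝓖 is f-tunable. If there is m < ω such that for all F∈𝓕, G∈𝓖 the union of all relations of F*×G* satisfies RP_m, then the class 𝓕×𝓖 = {F×G : F∈𝓕, G∈𝓖} is uniformly tunable. -/

import Mathlib

universe u

/-- A partition of the set `X`: a family of nonempty, pairwise disjoint sets covering `X`. -/
def IsPartition {X : Type*} (P : Set (Set X)) : Prop :=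
  (∀ U ∈ P, U.Nonempty) ∧ (∀ U ∈ P, ∀ V ∈ P, U ≠ V → Disjoint U V) ∧ ⋃₀ P = Set.univ

/-- `Q` refines `P`: every element of `Q` is contained in some element of `P`. -/
def Refines {X : Type*} (Q P : Set (Set X)) : Prop :=
  ∀ u ∈ Q, ∃ v ∈ P, u ⊆ v

/-- A partition `P` is `R`-tuned. -/
def TunedRel {X : Type*} (R : X → X → Prop) (P : Set (Set X)) : Prop :=
  ∀ U ∈ P, ∀ V ∈ P, (∃ a ∈ U, ∃ b ∈ V, R a b) → ∀ a ∈ U, ∃ b ∈ V, R a b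

/-- A partition is tuned in the frame `(X, (R_a)_{a∈A})` if it is `R_a`-tuned for each `a`. -/
def TunedFrame {A X : Type*} (R : A → X → X → Prop) (P : Set (Set X)) : Prop :=
  ∀ a, TunedRel (R a) P

/-- The frame `(X, (R_a)_{a∈A})` is `f`-tunable. -/
def Tunable {A X : Type*} (R : A → X → X → Prop) (f : ℕ → ℕ) : Prop :=
  ∀ P : Set (Set X), IsPartition P → P.Finite →
    ∃ Q : Set (Set X), IsPartition Q ∧ Refines Q P ∧ TunedFrame R Q ∧
      Q.Finite ∧ Q.ncard ≤ f P.ncard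

/-- The family of relations of the product frame `F × G`. -/
def prodRel {A B X Y : Type*} (R : A → X → X → Prop) (S : B → Y → Y → Prop) :
    A ⊕ B → X × Y → X × Y → Prop
  | Sum.inl a => fun p q => R a p.1 q.1 ∧ p.2 = q.2
  | Sum.inr b => fun p q => p.1 = q.1 ∧ S b p.2 q.2

/-- The union `R_F = ⋃_{a∈A} R_a` of the relations of a frame. -/
def unionRel {A X : Type*} (R : A → X → X → Prop) : X → X → Prop :=
  fun x y => ∃ a, R a x y

/-- The cluster of the point `x`: its equivalence class under `R* ∩ (R*)⁻¹`. -/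
def clusterOf {X : Type*} (R : X → X → Prop) (x : X) : Set X :=
  {y | Relation.ReflTransGen R x y ∧ Relation.ReflTransGen R y x}

/-- A strictly ascending chain of `n` points with respect to `Rs` (intended: `Rs = R*`). -/
def IsStrictChain {X : Type*} (Rs : X → X → Prop) (n : ℕ) (x : ℕ → X) : Prop :=
  ∀ i, i + 1 < n → Rs (x i) (x (i + 1)) ∧ ¬ Rs (x (i + 1)) (x i)

/-- The frame with union relation `R` has height at most `h`. -/
def HeightLe {X : Type*} (R : X → X → Prop) (h : ℕ) : Prop :=
  ∀ x : ℕ → X, ¬ IsStrictChain (Relation.ReflTransGen R) (h + 1) x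

/-- `RP R m` : every `R`-path of length `m+1` has a repeated point or a shortcut. -/
def RP {X : Type*} (R : X → X → Prop) (m : ℕ) : Prop :=
  ∀ x : ℕ → X, (∀ i ≤ m, R (x i) (x (i + 1))) →
    (∃ i j, i < j ∧ j ≤ m + 1 ∧ x i = x j) ∨
      (∃ i j, i < j ∧ j ≤ m ∧ R (x i) (x (j + 1)))


section Aux
open Set


def relOn {Z : Type*} (W : Set Z) (r : Z → Z → Prop) : Z → Z → Prop :=
  fun z z' => z ∈ W ∧ z' ∈ W ∧ r z z'

def rtcW {Z : Type*} (W : Set Z) (r : Z → Z → Prop) : Z → Z → Prop :=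
  Relation.ReflTransGen (relOn W r)

def eclW {Z : Type*} (W : Set Z) (r : Z → Z → Prop) (z z' : Z) : Prop :=
  rtcW W r z z' ∧ rtcW W r z' z

def clW {Z : Type*} (W : Set Z) (r : Z → Z → Prop) (z : Z) : Set Z :=
  {z' | eclW W r z z'}

def PartOn {Z : Type*} (W : Set Z) (P : Set (Set Z)) : Prop :=
  (∀ U ∈ P, U.Nonempty) ∧ (∀ U ∈ P, ∀ V ∈ P, U ≠ V → Disjoint U V) ∧ ⋃₀ P = W

def TunableOn {A' Z : Type*} (W : Set Z) (R : A' → Z → Z → Prop) (f : ℕ → ℕ) : Prop :=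
  ∀ P : Set (Set Z), PartOn W P → P.Finite →
    ∃ Q : Set (Set Z), PartOn W Q ∧ Refines Q P ∧ TunedFrame R Q ∧
      Q.Finite ∧ Q.ncard ≤ f P.ncard

def HeightLeOn {Z : Type*} (W : Set Z) (r : Z → Z → Prop) (h : ℕ) : Prop :=
  ∀ x : ℕ → Z, (∀ i, i ≤ h → x i ∈ W) → ¬ IsStrictChain (rtcW W r) (h + 1) x

lemma mem_right_of_rtcW_ne {Z : Type*} {W : Set Z} {r : Z → Z → Prop} {a b : Z}
    (h : rtcW W r a b) (hne : a ≠ b) : b ∈ W := by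
  rcases Relation.ReflTransGen.cases_tail h with h' | ⟨c, _, hc⟩
  · exact absurd h'.symm hne
  · exact hc.2.1

lemma relOn_univ {Z : Type*} (r : Z → Z → Prop) : relOn (Set.univ : Set Z) r = r := by
  funext a b; simp [relOn]

lemma tunable_iff_tunableOn_univ {A' Z : Type*} (R : A' → Z → Z → Prop) (f : ℕ → ℕ) :
    Tunable R f ↔ TunableOn Set.univ R f := Iff.rfl

lemma PartOn.subset {Z : Type*} {W : Set Z} {P : Set (Set Z)} (hP : PartOn W P)
    {U : Set Z} (hU : U ∈ P) : U ⊆ W := by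
  rw [← hP.2.2]; exact Set.subset_sUnion_of_mem hU

lemma PartOn.exists_mem {Z : Type*} {W : Set Z} {P : Set (Set Z)} (hP : PartOn W P)
    {z : Z} (hz : z ∈ W) : ∃ U ∈ P, z ∈ U := by
  rw [← hP.2.2] at hz; simpa using hz

lemma TunableOn.mono_bound {A' Z : Type*} {W : Set Z} {R : A' → Z → Z → Prop} {f f' : ℕ → ℕ}
    (h : TunableOn W R f) (hle : ∀ n, f n ≤ f' n) : TunableOn W R f' := by
  intro P hP hPf
  obtain ⟨Q, h1, h2, h3, h4, h5⟩ := h P hP hPf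
  exact ⟨Q, h1, h2, h3, h4, h5.trans (hle _)⟩

/-- monotonization -/
def monoF (f : ℕ → ℕ) : ℕ → ℕ := fun n => (Finset.range (n + 1)).sup f

lemma monoF_mono (f : ℕ → ℕ) : Monotone (monoF f) := by
  intro a b hab
  exact Finset.sup_mono (by simpa using Nat.add_le_add_right hab 1)

lemma le_monoF (f : ℕ → ℕ) (n : ℕ) : f n ≤ monoF f n :=
  Finset.le_sup (by simp)

lemma exists_inj_fin_of_ncard_le {Z : Type*} {s : Set Z} (hs : s.Finite) {n : ℕ}
    (h : s.ncard ≤ n) : ∃ f : s → Fin n, Function.Injective f := by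
  haveI := hs.fintype
  have hc : Fintype.card s ≤ Fintype.card (Fin n) := by
    rwa [Fintype.card_fin, ← Nat.card_eq_fintype_card, Nat.card_coe_set_eq]
  obtain ⟨e⟩ := Function.Embedding.nonempty_of_card_le hc
  exact ⟨e, e.injective⟩

lemma ncard_le_of_inj_to_finite {Z W : Type*} [Finite W] {s : Set Z}
    (f : s → W) (hf : Function.Injective f) : s.Finite ∧ s.ncard ≤ Nat.card W := by
  haveI : Finite s := Finite.of_injective f hf
  refine ⟨Set.toFinite s, ?_⟩
  rw [← Nat.card_coe_set_eq]
  exact Nat.card_le_card_of_injective f hf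

/-- localization of paths: a `W`-path whose "intermediate points" all lie in `W'`
is a `W'`-path. -/
lemma rtc_localize {Z : Type*} {W W' : Set Z} {r : Z → Z → Prop} {z z' : Z}
    (h : rtcW W r z z') (hmem : ∀ w, rtcW W r z w → rtcW W r w z' → w ∈ W') :
    rtcW W' r z z' := by
  induction h with
  | refl => exact Relation.ReflTransGen.refl
  | tail hzb hbc ih =>
    rename_i b c
    have hb : b ∈ W' := hmem b hzb (Relation.ReflTransGen.single hbc)
    have hc : c ∈ W' := hmem c (hzb.tail hbc) Relation.ReflTransGen.refl
    exact Relation.ReflTransGen.tail (ih (fun w hw hw2 => hmem w hw (hw2.tail hbc)))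
      ⟨hb, hc, hbc.2.2⟩

lemma rtcW_mono {Z : Type*} {W W' : Set Z} {r : Z → Z → Prop} (hWW : W ⊆ W') {z z' : Z}
    (h : rtcW W r z z') : rtcW W' r z z' :=
  Relation.ReflTransGen.mono (r := relOn W r) (p := relOn W' r)
    (fun a b hab => ⟨hWW hab.1, hWW hab.2.1, hab.2.2⟩) z z' h

lemma mem_clW_self {Z : Type*} {W : Set Z} {r : Z → Z → Prop} (z : Z) : z ∈ clW W r z :=
  ⟨Relation.ReflTransGen.refl, Relation.ReflTransGen.refl⟩

lemma eclW_symm {Z : Type*} {W : Set Z} {r : Z → Z → Prop} {z z' : Z}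
    (h : eclW W r z z') : eclW W r z' z := ⟨h.2, h.1⟩

lemma eclW_trans {Z : Type*} {W : Set Z} {r : Z → Z → Prop} {a b c : Z}
    (h : eclW W r a b) (h' : eclW W r b c) : eclW W r a c :=
  ⟨h.1.trans h'.1, h'.2.trans h.2⟩

lemma clW_eq_of_mem {Z : Type*} {W : Set Z} {r : Z → Z → Prop} {z z' : Z}
    (h : z' ∈ clW W r z) : clW W r z' = clW W r z := by
  ext w; exact ⟨fun hw => eclW_trans h hw, fun hw => eclW_trans (eclW_symm h) hw⟩

lemma clW_subset {Z : Type*} {W : Set Z} {r : Z → Z → Prop} {z : Z} (hz : z ∈ W) :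
    clW W r z ⊆ W := by
  intro w hw
  rcases (Relation.ReflTransGen.cases_head hw.1) with h | ⟨c, hc, _⟩
  · exact h ▸ hz
  · rcases (Relation.ReflTransGen.cases_head hw.2) with h | ⟨c, hc2, _⟩
    · exact h.symm ▸ hz
    · exact hc2.1

section Restr
variable {Z : Type*}
def restrictP (P : Set (Set Z)) (M : Set Z) : Set (Set Z) :=
  {S | S.Nonempty ∧ ∃ U ∈ P, S = U ∩ M}



lemma restrictP_partOn {W M : Set Z} {P : Set (Set Z)} (hP : PartOn W P) (hMW : M ⊆ W) :
    PartOn M (restrictP P M) := by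
  refine ⟨fun U hU => hU.1, ?_, ?_⟩
  · rintro U ⟨hU1, VU, hVU, rfl⟩ V ⟨hV1, VV, hVV, rfl⟩ hne
    have : VU ≠ VV := fun h => hne (by rw [h])
    have hd := hP.2.1 VU hVU VV hVV this
    rw [Set.disjoint_left] at hd ⊢
    rintro z ⟨hz1, hz2⟩ ⟨hz3, _⟩
    exact hd hz1 hz3
  · apply Set.eq_of_subset_of_subset
    · rintro z ⟨S, ⟨hS1, U, hU, rfl⟩, hz⟩
      exact hz.2
    · intro z hz
      obtain ⟨U, hU, hzU⟩ : ∃ U ∈ P, z ∈ U := by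
        have := hMW hz; rw [← hP.2.2] at this; simpa using this
      exact ⟨U ∩ M, ⟨⟨z, hzU, hz⟩, U, hU, rfl⟩, hzU, hz⟩

lemma restrictP_refines {P : Set (Set Z)} {M : Set Z} : Refines (restrictP P M) P := by
  rintro S ⟨hS1, U, hU, rfl⟩; exact ⟨U, hU, Set.inter_subset_left⟩

lemma restrictP_finite {P : Set (Set Z)} {M : Set Z} (hP : P.Finite) :
    (restrictP P M).Finite := by
  apply Set.Finite.subset (hP.image (fun U => U ∩ M))
  rintro S ⟨hS1, U, hU, rfl⟩; exact ⟨U, hU, rfl⟩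

lemma restrictP_ncard_le {P : Set (Set Z)} {M : Set Z} (hP : P.Finite) :
    (restrictP P M).ncard ≤ P.ncard := by
  have h1 : restrictP P M ⊆ (fun U => U ∩ M) '' P := by
    rintro S ⟨hS1, U, hU, rfl⟩; exact ⟨U, hU, rfl⟩
  calc (restrictP P M).ncard ≤ ((fun U => U ∩ M) '' P).ncard :=
        Set.ncard_le_ncard h1 (hP.image _)
    _ ≤ P.ncard := Set.ncard_image_le hP


end Restr
lemma tunableOn_of_subtype {A' Z : Type*} (S : Set Z) (R : A' → Z → Z → Prop) (f : ℕ → ℕ)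
    (h : Tunable (fun a (p q : S) => R a p.1 q.1) f) : TunableOn S R f := by
  intro P hP hPfin
  have hPsub : ∀ U ∈ P, U ⊆ S := by
    intro U hU
    rw [← hP.2.2]; exact Set.subset_sUnion_of_mem hU
  set P' : Set (Set ↥S) := (fun U => Subtype.val ⁻¹' U) '' P with hP'def
  have hinj : Set.InjOn (fun U => (Subtype.val ⁻¹' U : Set ↥S)) P := by
    intro U hU V hV he
    have hU' : Subtype.val '' (Subtype.val ⁻¹' U : Set ↥S) = U := by
      rw [Subtype.image_preimage_coe]; exact Set.inter_eq_self_of_subset_right (hPsub U hU)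
    have hV' : Subtype.val '' (Subtype.val ⁻¹' V : Set ↥S) = V := by
      rw [Subtype.image_preimage_coe]; exact Set.inter_eq_self_of_subset_right (hPsub V hV)
    rw [← hU', ← hV']
    exact congrArg (Set.image Subtype.val) he
  have hP'part : IsPartition P' := by
    refine ⟨?_, ?_, ?_⟩
    · rintro _ ⟨U, hU, rfl⟩
      obtain ⟨z, hz⟩ := hP.1 U hU
      exact ⟨⟨z, hPsub U hU hz⟩, hz⟩
    · rintro _ ⟨U, hU, rfl⟩ _ ⟨V, hV, rfl⟩ hne
      have : U ≠ V := fun hh => hne (by rw [hh])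
      have hd := hP.2.1 U hU V hV this
      rw [Set.disjoint_left] at hd ⊢
      intro p hp hp2
      exact hd hp hp2
    · ext p
      simp only [Set.mem_sUnion, Set.mem_univ, iff_true]
      have : (p : Z) ∈ ⋃₀ P := by rw [hP.2.2]; exact p.2
      obtain ⟨U, hU, hpU⟩ := this
      exact ⟨Subtype.val ⁻¹' U, ⟨U, hU, rfl⟩, hpU⟩
  have hP'fin : P'.Finite := hPfin.image _
  have hP'card : P'.ncard = P.ncard := Set.ncard_image_of_injOn hinj
  obtain ⟨Q', hQ'part, hQ'ref, hQ'tuned, hQ'fin, hQ'card⟩ := h P' hP'part hP'fin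
  refine ⟨(fun V => Subtype.val '' V) '' Q', ?_, ?_, ?_, hQ'fin.image _, ?_⟩
  · refine ⟨?_, ?_, ?_⟩
    · rintro _ ⟨V, hV, rfl⟩
      obtain ⟨p, hp⟩ := hQ'part.1 V hV
      exact ⟨p, p, hp, rfl⟩
    · rintro _ ⟨V₁, hV₁, rfl⟩ _ ⟨V₂, hV₂, rfl⟩ hne
      have : V₁ ≠ V₂ := fun hh => hne (by rw [hh])
      have hd := hQ'part.2.1 V₁ hV₁ V₂ hV₂ this
      rw [Set.disjoint_left] at hd ⊢
      rintro z ⟨p, hp, rfl⟩ ⟨q, hq, hqe⟩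
      have : q = p := Subtype.ext hqe
      exact hd hp (this ▸ hq)
    · ext z
      simp only [Set.mem_sUnion]
      constructor
      · rintro ⟨_, ⟨V, hV, rfl⟩, p, hp, rfl⟩
        exact p.2
      · intro hz
        have : (⟨z, hz⟩ : ↥S) ∈ ⋃₀ Q' := by rw [hQ'part.2.2]; trivial
        obtain ⟨V, hV, hpV⟩ := this
        exact ⟨Subtype.val '' V, ⟨V, hV, rfl⟩, ⟨z, hz⟩, hpV, rfl⟩
  · rintro _ ⟨V, hV, rfl⟩
    obtain ⟨U', ⟨U, hU, rfl⟩, hsub⟩ := hQ'ref V hV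
    refine ⟨U, hU, ?_⟩
    rintro _ ⟨p, hp, rfl⟩
    exact hsub hp
  · intro a U hU V hV hex z hz
    obtain ⟨V₁, hV₁, rfl⟩ := hU
    obtain ⟨V₂, hV₂, rfl⟩ := hV
    obtain ⟨_, ⟨p, hp, rfl⟩, _, ⟨q, hq, rfl⟩, hR⟩ := hex
    obtain ⟨p', hp', rfl⟩ := hz
    obtain ⟨q', hq', hR'⟩ :=
      hQ'tuned a V₁ hV₁ V₂ hV₂ ⟨p, hp, q, hq, hR⟩ p' hp'
    exact ⟨q', ⟨q', hq', rfl⟩, hR'⟩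
  · calc ((fun V => Subtype.val '' V) '' Q').ncard ≤ Q'.ncard := Set.ncard_image_le hQ'fin
      _ ≤ f P'.ncard := hQ'card
      _ = f P.ncard := by rw [hP'card]
section L0
open Set
variable {A' : Type*} [Finite A']

/-- piece of the chosen cluster partition with a given index -/
private def pieceAtD {Z : Type*} {K : ℕ} (QC : Set (Set Z)) (ι : ↥QC → Fin K) (i : Fin K) :
    Set Z := {z | ∃ p : ↥QC, ι p = i ∧ z ∈ p.1}

lemma L0 (g : ℕ → ℕ) (hg : Monotone g) :
    ∃ T : ℕ → ℕ, ∀ (Z : Type u) (R : A' → Z → Z → Prop) (M : Set Z),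
      (∀ z ∈ M, ∀ z' ∈ M, unionRel R z z' → eclW M (unionRel R) z z') →
      (∀ z ∈ M, TunableOn (clW M (unionRel R) z) R g) →
      TunableOn M R T := by
  refine ⟨fun n => Nat.card (((Fin (g n) → Option (Fin n)) ×
    (A' → Fin (g n) → Fin (g n) → Prop)) × Fin (g n)), ?_⟩
  intro Z R M hsucc htun P hP hPfin
  classical
  set n := P.ncard with hn
  set K := g n with hK
  set r := unionRel R with hr
  -- the type of cluster labels
  set 𝕋 := (Fin K → Option (Fin n)) × (A' → Fin K → Fin K → Prop) with h𝕋
  -- clusters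
  set Cl : Z → Set Z := fun z => clW M r z with hCl
  set Clu := {C : Set Z // ∃ z ∈ M, C = Cl z} with hClu
  have hCluM : ∀ C : Clu, C.1 ⊆ M := by
    rintro ⟨C, z, hz, rfl⟩; exact clW_subset hz
  -- choose tuned partitions of each cluster
  have hex : ∀ C : Clu, ∃ Q, PartOn C.1 Q ∧ Refines Q (restrictP P C.1) ∧
      TunedFrame R Q ∧ Q.Finite ∧ Q.ncard ≤ K := by
    rintro ⟨C, z, hz, rfl⟩
    obtain ⟨Q, h1, h2, h3, h4, h5⟩ := htun z hz (restrictP P (Cl z))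
      (restrictP_partOn hP (clW_subset hz)) (restrictP_finite hPfin)
    exact ⟨Q, h1, h2, h3, h4, h5.trans (hg (restrictP_ncard_le hPfin))⟩
  choose QC hQC1 hQC2 hQC3 hQC4 hQC5 using hex
  have hι : ∀ C : Clu, ∃ ι : ↥(QC C) → Fin K, Function.Injective ι :=
    fun C => exists_inj_fin_of_ncard_le (hQC4 C) (hQC5 C)
  choose ι hιinj using hι
  set pieceAt : Clu → Fin K → Set Z := fun C i => pieceAtD (QC C) (ι C) i with hpieceAt
  have piece_eq : ∀ (C : Clu) (p : ↥(QC C)), pieceAt C (ι C p) = p.1 := by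
    intro C p
    apply Set.eq_of_subset_of_subset
    · rintro z ⟨q, hq, hzq⟩
      rwa [hιinj C hq] at hzq
    · intro z hz; exact ⟨p, rfl, hz⟩
  have piece_subset : ∀ (C : Clu) (i : Fin K), pieceAt C i ⊆ C.1 := by
    rintro C i z ⟨p, hp, hzp⟩
    exact (hQC1 C).subset p.2 hzp
  have piece_uniq : ∀ (C : Clu) (i j : Fin K) (z : Z),
      z ∈ pieceAt C i → z ∈ pieceAt C j → i = j := by
    rintro C i j z ⟨p, hp, hzp⟩ ⟨q, hq, hzq⟩
    have hpq : p.1 = q.1 := by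
      by_contra hne
      exact Set.disjoint_left.mp ((hQC1 C).2.1 p.1 p.2 q.1 q.2 hne) hzp hzq
    rw [← hp, ← hq, Subtype.ext hpq]
  have clu_of_mem : ∀ (C : Clu) (i : Fin K) (z : Z), z ∈ pieceAt C i → C.1 = Cl z := by
    rintro ⟨C, w, hw, rfl⟩ i z hz
    have : z ∈ Cl w := piece_subset _ i hz
    exact (clW_eq_of_mem this).symm
  -- labels for parts of P
  obtain ⟨eP, hePinj⟩ := exists_inj_fin_of_ncard_le hPfin (le_refl n)
  set labUp : Set Z → Option (Fin n) := fun Spc =>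
    if h : ∃ U, U ∈ P ∧ Spc ⊆ U ∧ Spc.Nonempty then some (eP ⟨h.choose, h.choose_spec.1⟩)
    else none with hlabUp
  have lab_correct : ∀ (Spc U : Set Z) (hU : U ∈ P), Spc ⊆ U → Spc.Nonempty →
      labUp Spc = some (eP ⟨U, hU⟩) := by
    intro Spc U hU hsub hne
    have hcond : ∃ U', U' ∈ P ∧ Spc ⊆ U' ∧ Spc.Nonempty := ⟨U, hU, hsub, hne⟩
    rw [hlabUp]; simp only [dif_pos hcond]
    have hU' := hcond.choose_spec
    obtain ⟨z, hz⟩ := hne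
    have : hcond.choose = U := by
      by_contra hne2
      exact Set.disjoint_left.mp (hP.2.1 _ hU'.1 U hU hne2) (hU'.2.1 hz) (hsub hz)
    congr 1
    exact congrArg eP (Subtype.ext this)
  -- the type of a cluster
  set tc : Clu → 𝕋 := fun C =>
    (fun i => labUp (pieceAt C i),
     fun a i j => ∃ u ∈ pieceAt C i, ∃ v ∈ pieceAt C j, R a u v) with htc
  set bigU : 𝕋 × Fin K → Set Z := fun τi =>
    {z | ∃ C : Clu, tc C = τi.1 ∧ z ∈ pieceAt C τi.2} with hbigU
  set Q : Set (Set Z) := {S | (∃ τi, S = bigU τi) ∧ S.Nonempty} with hQ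
  -- membership
  have mem_big : ∀ z ∈ M, ∃ τi, z ∈ bigU τi := by
    intro z hz
    set C : Clu := ⟨Cl z, z, hz, rfl⟩ with hC
    obtain ⟨p, hp, hzp⟩ : ∃ p ∈ QC C, z ∈ p := by
      have : z ∈ ⋃₀ QC C := by rw [(hQC1 C).2.2]; exact mem_clW_self z
      simpa using this
    exact ⟨(tc C, ι C ⟨p, hp⟩), C, rfl, ⟨⟨p, hp⟩, rfl, hzp⟩⟩
  have big_subset : ∀ τi, bigU τi ⊆ M := by
    rintro τi z ⟨C, hτ, hz⟩
    exact hCluM C (piece_subset C _ hz)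
  have big_disj : ∀ τi τi' (z : Z), z ∈ bigU τi → z ∈ bigU τi' → τi = τi' := by
    rintro ⟨τ, i⟩ ⟨τ', i'⟩ z ⟨C, hτ, hz⟩ ⟨C', hτ', hz'⟩
    replace hτ : tc C = τ := hτ
    replace hτ' : tc C' = τ' := hτ'
    have hCC' : C = C' := by
      apply Subtype.ext
      rw [clu_of_mem C i z hz, clu_of_mem C' i' z hz']
    subst hCC'
    have : i = i' := piece_uniq C i i' z hz hz'
    rw [← hτ, ← hτ', this]
  have hQpart : PartOn M Q := by
    refine ⟨fun U hU => hU.2, ?_, ?_⟩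
    · rintro U ⟨⟨τi, rfl⟩, hUne⟩ V ⟨⟨τi', rfl⟩, hVne⟩ hne
      rw [Set.disjoint_left]
      intro z hz hz'
      exact hne (by rw [big_disj τi τi' z hz hz'])
    · apply Set.eq_of_subset_of_subset
      · rintro z ⟨S, ⟨⟨τi, rfl⟩, hSne⟩, hz⟩
        exact big_subset τi hz
      · intro z hz
        obtain ⟨τi, hτi⟩ := mem_big z hz
        exact ⟨bigU τi, ⟨⟨τi, rfl⟩, ⟨z, hτi⟩⟩, hτi⟩
  have hQref : Refines Q P := by
    rintro S ⟨⟨⟨τ, i⟩, rfl⟩, z₀, C₀, hτ₀, hz₀⟩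
    replace hτ₀ : tc C₀ = τ := hτ₀
    obtain ⟨p₀, hp₀i, hz₀p⟩ := hz₀
    replace hp₀i : ι C₀ p₀ = i := hp₀i
    obtain ⟨U₀, hU₀P, hp₀U⟩ : ∃ U ∈ P, p₀.1 ⊆ U := by
      obtain ⟨V, hV, hsub⟩ := hQC2 C₀ p₀.1 p₀.2
      obtain ⟨U, hU, hsub2⟩ := restrictP_refines V hV
      exact ⟨U, hU, hsub.trans hsub2⟩
    refine ⟨U₀, hU₀P, ?_⟩
    have hlab₀ : τ.1 i = some (eP ⟨U₀, hU₀P⟩) := by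
      rw [← hτ₀]
      show labUp (pieceAt C₀ i) = _
      rw [← hp₀i, piece_eq]
      exact lab_correct _ _ hU₀P hp₀U ((hQC1 C₀).1 p₀.1 p₀.2)
    rintro w ⟨C₁, hτ₁, hw⟩
    replace hτ₁ : tc C₁ = τ := hτ₁
    obtain ⟨q₁, hq₁i, hwq⟩ := hw
    replace hq₁i : ι C₁ q₁ = i := hq₁i
    obtain ⟨U₁, hU₁P, hq₁U⟩ : ∃ U ∈ P, q₁.1 ⊆ U := by
      obtain ⟨V, hV, hsub⟩ := hQC2 C₁ q₁.1 q₁.2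
      obtain ⟨U, hU, hsub2⟩ := restrictP_refines V hV
      exact ⟨U, hU, hsub.trans hsub2⟩
    have hlab₁ : τ.1 i = some (eP ⟨U₁, hU₁P⟩) := by
      rw [← hτ₁]
      show labUp (pieceAt C₁ i) = _
      rw [← hq₁i, piece_eq]
      exact lab_correct _ _ hU₁P hq₁U ((hQC1 C₁).1 q₁.1 q₁.2)
    have : U₁ = U₀ := by
      have := hlab₀.symm.trans hlab₁
      have := hePinj (Option.some_injective _ this.symm)
      exact congrArg Subtype.val this
    rw [← this]
    exact hq₁U hwq
  have hQtuned : TunedFrame R Q := by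
    intro a U hU V hV hex w hwU
    obtain ⟨⟨⟨τ, i⟩, rfl⟩, -⟩ := hU
    obtain ⟨⟨⟨τ', j⟩, rfl⟩, -⟩ := hV
    obtain ⟨z, hzU, z', hz'V, hRzz'⟩ := hex
    obtain ⟨C, hτC, hzC⟩ := hzU
    obtain ⟨C', hτ'C', hz'C'⟩ := hz'V
    replace hτC : tc C = τ := hτC
    replace hτ'C' : tc C' = τ' := hτ'C'
    -- z' is in the same cluster as z
    have hzM : z ∈ M := hCluM C (piece_subset C i hzC)
    have hz'M : z' ∈ M := hCluM C' (piece_subset C' j hz'C')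
    have hecl : eclW M r z z' := hsucc z hzM z' hz'M ⟨a, hRzz'⟩
    have hCC' : C = C' := by
      apply Subtype.ext
      rw [clu_of_mem C i z hzC, clu_of_mem C' j z' hz'C']
      exact (clW_eq_of_mem hecl).symm
    subst hCC'
    have hττ' : τ = τ' := by rw [← hτC, ← hτ'C']
    subst hττ'
    -- the relational component of τ holds at (i, j)
    have hrel : τ.2 a i j := by
      rw [← hτC]
      exact ⟨z, hzC, z', hz'C', hRzz'⟩
    -- now transfer to the cluster of w
    obtain ⟨C'', hτC'', hwC''⟩ := hwU
    replace hτC'' : tc C'' = τ := hτC''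
    have hrel'' : ∃ u ∈ pieceAt C'' i, ∃ v ∈ pieceAt C'' j, R a u v := by
      have : (tc C'').2 a i j = τ.2 a i j := by rw [hτC'']
      rw [← this] at hrel
      exact hrel
    obtain ⟨u, huC, v, hvC, hRuv⟩ := hrel''
    obtain ⟨p'', hp''i, hup⟩ := huC
    obtain ⟨q'', hq''j, hvq⟩ := hvC
    have hw_in_p : w ∈ p''.1 := by
      obtain ⟨p₄, hp₄, hwp₄⟩ := hwC''
      replace hp₄ : ι C'' p₄ = i := hp₄
      have : p₄ = p'' := hιinj C'' (by rw [hp₄, hp''i])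
      rwa [← this]
    obtain ⟨v', hv'q, hRwv'⟩ :=
      hQC3 C'' a p''.1 p''.2 q''.1 q''.2 ⟨u, hup, v, hvq, hRuv⟩ w hw_in_p
    refine ⟨v', ⟨C'', hτC'', ?_⟩, hRwv'⟩
    rw [← hq''j, piece_eq]
    exact hv'q
  -- cardinality
  have hQcard : Q.Finite ∧ Q.ncard ≤ Nat.card (𝕋 × Fin K) := by
    apply ncard_le_of_inj_to_finite (fun S => S.2.1.choose)
    intro S₁ S₂ hchoose
    apply Subtype.ext
    rw [S₁.2.1.choose_spec, S₂.2.1.choose_spec]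
    exact congrArg bigU hchoose
  exact ⟨Q, hQpart, hQref, hQtuned, hQcard.1, hQcard.2⟩

end L0
section L1
open Set
variable {A' : Type*} [Finite A']

lemma tunableOn_empty {Z : Type*} (R : A' → Z → Z → Prop) (T : ℕ → ℕ) :
    TunableOn (∅ : Set Z) R T := by
  intro P hP hPfin
  refine ⟨∅, ⟨by simp, by simp, by simp⟩, by rintro u hu; simp at hu,
    fun a => by rintro U hU; simp at hU, Set.finite_empty, by simp⟩

lemma L1 (g : ℕ → ℕ) (hg : Monotone g) (h : ℕ) :
    ∃ T : ℕ → ℕ, Monotone T ∧ ∀ (Z : Type u) (R : A' → Z → Z → Prop) (W : Set Z),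
      HeightLeOn W (unionRel R) h →
      (∀ z ∈ W, TunableOn (clW W (unionRel R) z) R g) →
      TunableOn W R T := by
  induction h with
  | zero =>
    refine ⟨fun _ => 0, monotone_const, ?_⟩
    intro Z R W hH htun
    rcases Set.eq_empty_or_nonempty W with rfl | ⟨z, hz⟩
    · intro P hP hPfin
      obtain ⟨Q, h1, h2, h3, h4, h5⟩ := tunableOn_empty R (fun _ => 0) P hP hPfin
      exact ⟨Q, h1, h2, h3, h4, h5⟩
    · exact absurd (fun i _ => by omega) (hH (fun _ => z) (fun i _ => hz))
  | succ h IH =>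
    obtain ⟨Th, hThmono, hTh⟩ := IH
    obtain ⟨T₀, hT₀⟩ := L0 (A' := A') g hg
    set T₀' := monoF T₀ with hT₀'
    set B : ℕ → ℕ := fun n => n * Nat.card (A' → Fin (T₀' n) → Prop) with hB
    refine ⟨monoF (fun n => T₀' n + Th (B n)), monoF_mono _, ?_⟩
    intro Z R W hH htun
    apply TunableOn.mono_bound (f := fun n => T₀' n + Th (B n)) _ (le_monoF _)
    intro P hP hPfin
    classical
    set r := unionRel R with hr
    set n := P.ncard with hn
    set D1 : Set Z := {z | z ∈ W ∧ ∀ z', rtcW W r z z' → rtcW W r z' z} with hD1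
    set W' : Set Z := W \ D1 with hW'
    have hD1W : D1 ⊆ W := fun z hz => hz.1
    have hW'W : W' ⊆ W := Set.diff_subset
    -- successors of depth-one points stay in their cluster
    have f2 : ∀ z ∈ D1, ∀ z', z' ∈ W → r z z' → z' ∈ D1 ∧ eclW W r z z' := by
      intro z hz z' hz'W hrzz'
      have hstep : rtcW W r z z' := Relation.ReflTransGen.single ⟨hz.1, hz'W, hrzz'⟩
      have hback : rtcW W r z' z := hz.2 z' hstep
      exact ⟨⟨hz'W, fun w hw => (hz.2 w (hstep.trans hw)).trans hstep⟩, hstep, hback⟩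
    have f3 : ∀ z ∈ D1, ∀ z', eclW W r z z' → z' ∈ D1 := by
      intro z hz z' hecl
      by_cases he : z = z'
      · exact he ▸ hz
      · exact ⟨mem_right_of_rtcW_ne hecl.1 he,
          fun w hw => (hz.2 w (hecl.1.trans hw)).trans hecl.1⟩
    have f4 : ∀ z ∈ D1, clW D1 r z = clW W r z := by
      intro z hz
      ext z'
      constructor
      · exact fun h' => ⟨rtcW_mono hD1W h'.1, rtcW_mono hD1W h'.2⟩
      · intro h'
        exact ⟨rtc_localize h'.1 (fun w hw1 hw2 => f3 z hz w ⟨hw1, hw2.trans h'.2⟩),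
          rtc_localize h'.2 (fun w hw1 hw2 => f3 z hz w ⟨h'.1.trans hw1, hw2⟩)⟩
    have f5 : ∀ z ∈ D1, ∀ z' ∈ D1, r z z' → eclW D1 r z z' := by
      intro z hz z' hz' hrzz'
      have : z' ∈ clW W r z := (f2 z hz z' hz'.1 hrzz').2
      rw [← f4 z hz] at this
      exact this
    have f6 : ∀ z ∈ D1, TunableOn (clW D1 r z) R g := by
      intro z hz
      rw [f4 z hz]
      exact htun z (hD1W hz)
    have hL0 : TunableOn D1 R T₀' :=
      TunableOn.mono_bound (hT₀ Z R D1 f5 f6) (le_monoF T₀)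
    -- the lower part
    have f8 : ∀ z ∈ W', ∀ z', eclW W r z z' → z' ∈ W' := by
      intro z hz z' hecl
      have hz'W : z' ∈ W := by
        by_cases he : z = z'
        · exact he ▸ hz.1
        · exact mem_right_of_rtcW_ne hecl.1 he
      refine ⟨hz'W, fun hz'D1 => hz.2 (f3 z' hz'D1 z ⟨hecl.2, hecl.1⟩)⟩
    have f9 : ∀ z ∈ W', clW W' r z = clW W r z := by
      intro z hz
      ext z'
      constructor
      · exact fun h' => ⟨rtcW_mono hW'W h'.1, rtcW_mono hW'W h'.2⟩
      · intro h'
        exact ⟨rtc_localize h'.1 (fun w hw1 hw2 => f8 z hz w ⟨hw1, hw2.trans h'.2⟩),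
          rtc_localize h'.2 (fun w hw1 hw2 => f8 z hz w ⟨h'.1.trans hw1, hw2⟩)⟩
    have f10 : HeightLeOn W' r h := by
      intro x hmem hchain
      have hxh : x h ∈ W' := hmem h le_rfl
      obtain ⟨y, hy1, hy2⟩ : ∃ y, rtcW W r (x h) y ∧ ¬ rtcW W r y (x h) := by
        have := hxh.2
        rw [hD1] at this
        simp only [Set.mem_setOf_eq, not_and, not_forall] at this
        obtain ⟨y, hy1, hy2⟩ := this hxh.1
        exact ⟨y, hy1, hy2⟩
      have hyW : y ∈ W := by
        by_cases he : x h = y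
        · exact he ▸ hxh.1
        · exact mem_right_of_rtcW_ne hy1 he
      set x' : ℕ → Z := fun i => if i ≤ h then x i else y with hx'
      apply hH x' (fun i hi => ?_) (fun i hi => ?_)
      · by_cases hih : i ≤ h
        · simp only [hx', if_pos hih]; exact hW'W (hmem i hih)
        · simp only [hx', if_neg hih]; exact hyW
      · -- a strict step
        by_cases hih : i < h
        · have e1 : x' i = x i := by simp only [hx', if_pos (by omega : i ≤ h)]
          have e2 : x' (i + 1) = x (i + 1) := by
            simp only [hx', if_pos (by omega : i + 1 ≤ h)]
          rw [e1, e2]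
          obtain ⟨hfwd, hbwd⟩ := hchain i (by omega)
          constructor
          · exact rtcW_mono hW'W hfwd
          · intro hback
            apply hbwd
            apply rtc_localize hback
            intro w hw1 hw2
            have hwW : w ∈ W := by
              by_cases he : x (i+1) = w
              · exact he ▸ hW'W (hmem (i+1) (by omega))
              · exact mem_right_of_rtcW_ne hw1 he
            refine ⟨hwW, fun hwD1 => ?_⟩
            have hxiW' : x i ∈ W' := hmem i (by omega)
            exact hxiW'.2 (f3 w hwD1 (x i) ⟨hw2, hwD1.2 (x i) hw2⟩)
        · have hieq : i = h := by omega
          subst hieq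
          have e1 : x' i = x i := by simp only [hx', if_pos (le_refl i)]
          have e2 : x' (i + 1) = y := by simp only [hx', if_neg (by omega : ¬ i + 1 ≤ i)]
          rw [e1, e2]
          exact ⟨hy1, hy2⟩
    have f11 : ∀ z ∈ W', TunableOn (clW W' r z) R g := by
      intro z hz
      rw [f9 z hz]
      exact htun z (hW'W hz)
    have hIH : TunableOn W' R Th := hTh Z R W' f10 f11
    -- partition pieces
    set P₁ := restrictP P D1 with hP₁def
    have hP₁ : PartOn D1 P₁ := restrictP_partOn hP hD1W
    have hP₁fin : P₁.Finite := restrictP_finite hPfin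
    have hP₁card : P₁.ncard ≤ n := restrictP_ncard_le hPfin
    obtain ⟨Q₁, hQ₁part, hQ₁ref, hQ₁tuned, hQ₁fin, hQ₁card⟩ := hL0 P₁ hP₁ hP₁fin
    have hQ₁card' : Q₁.ncard ≤ T₀' n := hQ₁card.trans (monoF_mono T₀ hP₁card)
    set K₁ := T₀' n with hK₁
    obtain ⟨e₁, he₁inj⟩ := exists_inj_fin_of_ncard_le hQ₁fin hQ₁card'
    set σ : Z → (A' → Fin K₁ → Prop) := fun z a i =>
      ∃ V : ↥Q₁, e₁ V = i ∧ ∃ v ∈ V.1, R a z v with hσ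
    set P₂ := restrictP P W' with hP₂def
    have hP₂ : PartOn W' P₂ := restrictP_partOn hP hW'W
    have hP₂fin : P₂.Finite := restrictP_finite hPfin
    have hP₂card : P₂.ncard ≤ n := restrictP_ncard_le hPfin
    set P₂' : Set (Set Z) := {S | ∃ U ∈ P₂, ∃ z₀ ∈ U, S = {z ∈ U | σ z = σ z₀}} with hP₂'
    have hP₂'part : PartOn W' P₂' := by
      refine ⟨?_, ?_, ?_⟩
      · rintro S ⟨U, hU, z₀, hz₀, rfl⟩
        exact ⟨z₀, hz₀, rfl⟩
      · rintro S ⟨U, hU, z₀, hz₀, rfl⟩ S' ⟨U', hU', z₀', hz₀', rfl⟩ hne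
        rw [Set.disjoint_left]
        rintro z ⟨hzU, hzσ⟩ ⟨hzU', hzσ'⟩
        have hUU' : U = U' := by
          by_contra hUne
          exact Set.disjoint_left.mp (hP₂.2.1 U hU U' hU' hUne) hzU hzU'
        subst hUU'
        apply hne
        rw [← hzσ, ← hzσ']
      · apply Set.eq_of_subset_of_subset
        · rintro z ⟨S, ⟨U, hU, z₀, hz₀, rfl⟩, hz, _⟩
          exact hP₂.subset hU hz
        · intro z hz
          obtain ⟨U, hU, hzU⟩ := hP₂.exists_mem hz
          exact ⟨{w ∈ U | σ w = σ z}, ⟨U, hU, z, hzU, rfl⟩, hzU, rfl⟩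
    have hP₂'ref : Refines P₂' P := by
      rintro S ⟨U, hU, z₀, hz₀, rfl⟩
      obtain ⟨V, hV, hsub⟩ := restrictP_refines U hU
      exact ⟨V, hV, fun z hz => hsub hz.1⟩
    have hP₂'cardfin : P₂'.Finite ∧ P₂'.ncard ≤ B n := by
      haveI : Finite ↥P₂ := hP₂fin.to_subtype
      have key : ∀ S : ↥P₂', ∃ (U : ↥P₂) (F : A' → Fin K₁ → Prop),
          S.1 = {z ∈ U.1 | σ z = F} := by
        rintro ⟨S, U, hU, z₀, hz₀, rfl⟩
        exact ⟨⟨U, hU⟩, σ z₀, rfl⟩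
      choose FU FF hFUF using key
      have := ncard_le_of_inj_to_finite (s := P₂') (fun S => (FU S, FF S)) ?_
      · refine ⟨this.1, this.2.trans ?_⟩
        rw [Nat.card_prod]
        apply Nat.mul_le_mul_right
        rw [Nat.card_coe_set_eq]
        exact hP₂card
      · intro S₁ S₂ he
        have h1 : FU S₁ = FU S₂ := congrArg Prod.fst he
        have h2 : FF S₁ = FF S₂ := congrArg Prod.snd he
        apply Subtype.ext
        rw [hFUF S₁, hFUF S₂, h1, h2]
    obtain ⟨Q₂, hQ₂part, hQ₂ref, hQ₂tuned, hQ₂fin, hQ₂card⟩ :=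
      hIH P₂' hP₂'part hP₂'cardfin.1
    have hQ₂card' : Q₂.ncard ≤ Th (B n) := hQ₂card.trans (hThmono hP₂'cardfin.2)
    -- assemble
    refine ⟨Q₁ ∪ Q₂, ?_, ?_, ?_, hQ₁fin.union hQ₂fin, ?_⟩
    · refine ⟨?_, ?_, ?_⟩
      · rintro U (hU | hU)
        · exact hQ₁part.1 U hU
        · exact hQ₂part.1 U hU
      · rintro U hU V hV hne
        have hd : ∀ U₁ ∈ Q₁, ∀ U₂ ∈ Q₂, Disjoint U₁ U₂ := by
          intro U₁ hU₁ U₂ hU₂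
          rw [Set.disjoint_left]
          intro z hz1 hz2
          exact (hQ₂part.subset hU₂ hz2).2 (hQ₁part.subset hU₁ hz1)
        rcases hU with hU | hU <;> rcases hV with hV | hV
        · exact hQ₁part.2.1 U hU V hV hne
        · exact hd U hU V hV
        · exact (hd V hV U hU).symm
        · exact hQ₂part.2.1 U hU V hV hne
      · rw [Set.sUnion_union, hQ₁part.2.2, hQ₂part.2.2]
        exact Set.union_diff_cancel hD1W
    · rintro U (hU | hU)
      · obtain ⟨V, hV, hsub⟩ := hQ₁ref U hU
        obtain ⟨V', hV', hsub'⟩ := restrictP_refines V hV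
        exact ⟨V', hV', hsub.trans hsub'⟩
      · obtain ⟨V, hV, hsub⟩ := hQ₂ref U hU
        obtain ⟨V', hV', hsub'⟩ := hP₂'ref V hV
        exact ⟨V', hV', hsub.trans hsub'⟩
    · intro a U hU V hV hex w hw
      obtain ⟨z, hzU, z', hz'V, hRzz'⟩ := hex
      rcases hU with hU | hU <;> rcases hV with hV | hV
      · exact hQ₁tuned a U hU V hV ⟨z, hzU, z', hz'V, hRzz'⟩ w hw
      · -- U in the top, V in the bottom : impossible
        exfalso
        have hzD1 : z ∈ D1 := hQ₁part.subset hU hzU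
        have hz'W' : z' ∈ W' := hQ₂part.subset hV hz'V
        exact hz'W'.2 (f2 z hzD1 z' (hW'W hz'W') ⟨a, hRzz'⟩).1
      · -- U in the bottom, V in the top : use σ-constancy
        obtain ⟨S, hS, hUS⟩ := hQ₂ref U hU
        obtain ⟨U₀, hU₀, z₀, hz₀, rfl⟩ := hS
        have hσz : σ z = σ z₀ := (hUS hzU).2
        have hσw : σ w = σ z₀ := (hUS hw).2
        have hσzw : σ z = σ w := by rw [hσz, hσw]
        have hz_has : σ z a (e₁ ⟨V, hV⟩) := ⟨⟨V, hV⟩, rfl, z', hz'V, hRzz'⟩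
        have hw_has : σ w a (e₁ ⟨V, hV⟩) := by rw [← hσzw]; exact hz_has
        obtain ⟨V', he₁V', v, hvV', hRwv⟩ := hw_has
        have : V' = ⟨V, hV⟩ := he₁inj he₁V'
        rw [this] at hvV'
        exact ⟨v, hvV', hRwv⟩
      · exact hQ₂tuned a U hU V hV ⟨z, hzU, z', hz'V, hRzz'⟩ w hw
    · calc (Q₁ ∪ Q₂).ncard ≤ Q₁.ncard + Q₂.ncard := Set.ncard_union_le Q₁ Q₂
        _ ≤ T₀' n + Th (B n) := Nat.add_le_add hQ₁card' hQ₂card'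

end L1

section L2
open Set
variable {A B X Y : Type*}

lemma prod_tunable_right (R : A → X → X → Prop) (S : B → Y → Y → Prop)
    (C : Set X) (D : Set Y) (f : ℕ → ℕ) (hf : Monotone f) (K : ℕ)
    (hDfin : D.Finite) (hDcard : D.ncard ≤ K) (hC : TunableOn C R f) :
    TunableOn (C ×ˢ D) (prodRel R S) (fun n => f ((n + 1) ^ K) * K) := by
  intro P hP hPfin
  classical
  haveI hfinD : Finite ↥D := hDfin.to_subtype
  haveI hfinP : Finite ↥P := hPfin.to_subtype
  haveI hftP : Fintype ↥P := Fintype.ofFinite ↥P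
  set n := P.ncard with hn
  set same : X → X → Prop := fun c c' => ∀ d ∈ D, ∀ U ∈ P, ((c, d) ∈ U ↔ (c', d) ∈ U)
    with hsame
  have same_refl : ∀ c, same c c := fun c d _ U _ => Iff.rfl
  have same_symm : ∀ {c c'}, same c c' → same c' c :=
    fun h d hd U hU => (h d hd U hU).symm
  have same_trans : ∀ {c c' c''}, same c c' → same c' c'' → same c c'' :=
    fun h h' d hd U hU => (h d hd U hU).trans (h' d hd U hU)
  set Pc : Set (Set X) := {T | ∃ c₀ ∈ C, T = {c ∈ C | same c c₀}} with hPc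
  have hPcpart : PartOn C Pc := by
    refine ⟨?_, ?_, ?_⟩
    · rintro T ⟨c₀, hc₀, rfl⟩
      exact ⟨c₀, hc₀, same_refl c₀⟩
    · rintro T ⟨c₀, hc₀, rfl⟩ T' ⟨c₀', hc₀', rfl⟩ hne
      rw [Set.disjoint_left]
      rintro c ⟨hcC, hcs⟩ ⟨hcC', hcs'⟩
      apply hne
      ext w
      constructor
      · rintro ⟨hwC, hws⟩
        exact ⟨hwC, same_trans hws (same_trans (same_symm hcs) hcs')⟩
      · rintro ⟨hwC, hws⟩
        exact ⟨hwC, same_trans hws (same_trans (same_symm hcs') hcs)⟩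
    · apply Set.eq_of_subset_of_subset
      · rintro c ⟨T, ⟨c₀, hc₀, rfl⟩, hc, _⟩
        exact hc
      · intro c hc
        exact ⟨{w ∈ C | same w c}, ⟨c, hc, rfl⟩, hc, same_refl c⟩
  have hpartof : ∀ (c : X) (d : Y), c ∈ C → d ∈ D → ∃ U ∈ P, (c, d) ∈ U :=
    fun c d hc hd => hP.exists_mem (Set.mk_mem_prod hc hd)
  have hPccardfin : Pc.Finite ∧ Pc.ncard ≤ (n + 1) ^ K := by
    have key : ∀ T : ↥Pc, ∃ c₀, c₀ ∈ C ∧ T.1 = {c ∈ C | same c c₀} := by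
      rintro ⟨T, c₀, hc₀, rfl⟩; exact ⟨c₀, hc₀, rfl⟩
    choose rep hrepC hrepT using key
    set prof : ↥Pc → (↥D → Option ↥P) := fun T d =>
      some ⟨(hpartof (rep T) d.1 (hrepC T) d.2).choose,
        (hpartof (rep T) d.1 (hrepC T) d.2).choose_spec.1⟩ with hprof
    have hprofinj : Function.Injective prof := by
      intro T₁ T₂ he
      have hsame12 : same (rep T₁) (rep T₂) := by
        intro d hd U hU
        have h1 := (hpartof (rep T₁) d (hrepC T₁) hd).choose_spec
        have h2 := (hpartof (rep T₂) d (hrepC T₂) hd).choose_spec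
        have : (⟨(hpartof (rep T₁) d (hrepC T₁) hd).choose, _⟩ : ↥P) =
            ⟨(hpartof (rep T₂) d (hrepC T₂) hd).choose, h2.1⟩ :=
          Option.some_injective _ (congrFun he ⟨d, hd⟩)
        have heq : (hpartof (rep T₁) d (hrepC T₁) hd).choose =
            (hpartof (rep T₂) d (hrepC T₂) hd).choose := congrArg Subtype.val this
        constructor
        · intro hmem
          have hU1 : U = (hpartof (rep T₁) d (hrepC T₁) hd).choose := by
            by_contra hne
            exact Set.disjoint_left.mp (hP.2.1 U hU _ h1.1 hne) hmem h1.2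
          rw [hU1, heq]; exact h2.2
        · intro hmem
          have hU2 : U = (hpartof (rep T₂) d (hrepC T₂) hd).choose := by
            by_contra hne
            exact Set.disjoint_left.mp (hP.2.1 U hU _ h2.1 hne) hmem h2.2
          rw [hU2, ← heq]; exact h1.2
      apply Subtype.ext
      rw [hrepT T₁, hrepT T₂]
      ext w
      exact ⟨fun ⟨hw, hs⟩ => ⟨hw, same_trans hs hsame12⟩,
        fun ⟨hw, hs⟩ => ⟨hw, same_trans hs (same_symm hsame12)⟩⟩
    have hb := ncard_le_of_inj_to_finite prof hprofinj
    refine ⟨hb.1, hb.2.trans ?_⟩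
    calc Nat.card (↥D → Option ↥P) = Nat.card (Option ↥P) ^ Nat.card ↥D := Nat.card_fun
      _ = (n + 1) ^ Nat.card ↥D := by
          rw [Finite.card_option, Nat.card_coe_set_eq]
      _ ≤ (n + 1) ^ K := Nat.pow_le_pow_right (Nat.succ_le_succ (Nat.zero_le n))
          (by rw [Nat.card_coe_set_eq]; exact hDcard)
  obtain ⟨Uc, hUcpart, hUcref, hUctuned, hUcfin, hUccard⟩ := hC Pc hPcpart hPccardfin.1
  have hUccard' : Uc.ncard ≤ f ((n + 1) ^ K) := hUccard.trans (hf hPccardfin.2)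
  set Q : Set (Set (X × Y)) := {q | ∃ U ∈ Uc, ∃ d ∈ D, q = U ×ˢ ({d} : Set Y)} with hQdef
  refine ⟨Q, ?_, ?_, ?_, ?_⟩
  · refine ⟨?_, ?_, ?_⟩
    · rintro q ⟨U, hU, d, hd, rfl⟩
      obtain ⟨c, hc⟩ := hUcpart.1 U hU
      exact ⟨(c, d), hc, rfl⟩
    · rintro q ⟨U, hU, d, hd, rfl⟩ q' ⟨U', hU', d', hd', rfl⟩ hne
      rw [Set.disjoint_left]
      rintro ⟨c, e⟩ ⟨hcU, he⟩ ⟨hcU', he'⟩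
      simp only [Set.mem_singleton_iff] at he he'
      subst he
      have : U = U' := by
        by_contra hUne
        exact Set.disjoint_left.mp (hUcpart.2.1 U hU U' hU' hUne) hcU hcU'
      exact hne (by rw [this, he'])
    · apply Set.eq_of_subset_of_subset
      · rintro ⟨c, e⟩ ⟨q, ⟨U, hU, d, hd, rfl⟩, hcU, he⟩
        simp only [Set.mem_singleton_iff] at he
        exact ⟨hUcpart.subset hU hcU, he ▸ hd⟩
      · rintro ⟨c, e⟩ ⟨hc, he⟩
        obtain ⟨U, hU, hcU⟩ := hUcpart.exists_mem hc
        exact ⟨U ×ˢ {e}, ⟨U, hU, e, he, rfl⟩, hcU, rfl⟩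
  · rintro q ⟨U, hU, d, hd, rfl⟩
    obtain ⟨T, hT, hsub⟩ := hUcref U hU
    obtain ⟨c₀, hc₀, rfl⟩ := hT
    obtain ⟨U₀, hU₀, hc₀U₀⟩ := hpartof c₀ d hc₀ hd
    refine ⟨U₀, hU₀, ?_⟩
    rintro ⟨c, e⟩ ⟨hcU, he⟩
    simp only [Set.mem_singleton_iff] at he
    rw [he]
    exact ((hsub hcU).2 d hd U₀ hU₀).mpr hc₀U₀
  · intro ab q hq q' hq' hex p hp
    obtain ⟨U, hU, d, hd, rfl⟩ := hq
    obtain ⟨U', hU', d', hd', rfl⟩ := hq'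
    obtain ⟨⟨c1, e1⟩, ⟨hc1, he1⟩, ⟨c2, e2⟩, ⟨hc2, he2⟩, hrel⟩ := hex
    obtain ⟨w, ew⟩ := p
    obtain ⟨hwU, hew⟩ := hp
    simp only [Set.mem_singleton_iff] at he1 he2 hew
    replace he1 : e1 = d := he1
    replace he2 : e2 = d' := he2
    replace hew : ew = d := hew
    cases ab with
    | inl a =>
      obtain ⟨hR12, hd12⟩ := hrel
      replace hd12 : e1 = e2 := hd12
      have hdd' : d = d' := by rw [← he1, ← he2]; exact hd12
      obtain ⟨c3, hc3, hR3⟩ := hUctuned a U hU U' hU' ⟨c1, hc1, c2, hc2, hR12⟩ w hwU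
      refine ⟨(c3, d'), ⟨hc3, rfl⟩, hR3, ?_⟩
      show ew = d'
      rw [hew, hdd']
    | inr b =>
      obtain ⟨hc12, hS12⟩ := hrel
      replace hc12 : c1 = c2 := hc12
      replace hS12 : S b e1 e2 := hS12
      have hc1U' : c1 ∈ U' := by rw [hc12]; exact hc2
      have hUU' : U = U' := by
        by_contra hne
        exact Set.disjoint_left.mp (hUcpart.2.1 U hU U' hU' hne) hc1 hc1U'
      have hwU' : w ∈ U' := by rw [← hUU']; exact hwU
      refine ⟨(w, d'), ⟨hwU', rfl⟩, rfl, ?_⟩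
      show S b ew d'
      rw [hew, ← he1, ← he2]
      exact hS12
  · have key : ∀ q : ↥Q, ∃ (U : ↥Uc) (d : ↥D), q.1 = U.1 ×ˢ ({d.1} : Set Y) := by
      rintro ⟨q, U, hU, d, hd, rfl⟩; exact ⟨⟨U, hU⟩, ⟨d, hd⟩, rfl⟩
    choose qU qd hqUd using key
    haveI hfinU : Finite ↥Uc := hUcfin.to_subtype
    have hb := ncard_le_of_inj_to_finite (s := Q) (fun q => (qU q, qd q)) ?_
    · refine ⟨hb.1, hb.2.trans ?_⟩
      rw [Nat.card_prod]
      apply Nat.mul_le_mul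
      · rw [Nat.card_coe_set_eq]; exact hUccard'
      · rw [Nat.card_coe_set_eq]; exact hDcard
    · intro q₁ q₂ he
      have h1 : qU q₁ = qU q₂ := congrArg Prod.fst he
      have h2 : qd q₁ = qd q₂ := congrArg Prod.snd he
      apply Subtype.ext
      rw [hqUd q₁, hqUd q₂, h1, h2]

lemma prod_tunable_left (R : A → X → X → Prop) (S : B → Y → Y → Prop)
    (C : Set X) (D : Set Y) (f : ℕ → ℕ) (hf : Monotone f) (K : ℕ)
    (hCfin : C.Finite) (hCcard : C.ncard ≤ K) (hD : TunableOn D S f) :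
    TunableOn (C ×ˢ D) (prodRel R S) (fun n => f ((n + 1) ^ K) * K) := by
  intro P hP hPfin
  classical
  haveI hfinC : Finite ↥C := hCfin.to_subtype
  haveI hfinP : Finite ↥P := hPfin.to_subtype
  haveI hftP : Fintype ↥P := Fintype.ofFinite ↥P
  set n := P.ncard with hn
  set same : Y → Y → Prop := fun d d' => ∀ c ∈ C, ∀ U ∈ P, ((c, d) ∈ U ↔ (c, d') ∈ U)
    with hsame
  have same_refl : ∀ d, same d d := fun d c _ U _ => Iff.rfl
  have same_symm : ∀ {d d'}, same d d' → same d' d :=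
    fun h c hc U hU => (h c hc U hU).symm
  have same_trans : ∀ {d d' d''}, same d d' → same d' d'' → same d d'' :=
    fun h h' c hc U hU => (h c hc U hU).trans (h' c hc U hU)
  set Pc : Set (Set Y) := {T | ∃ d₀ ∈ D, T = {d ∈ D | same d d₀}} with hPc
  have hPcpart : PartOn D Pc := by
    refine ⟨?_, ?_, ?_⟩
    · rintro T ⟨d₀, hd₀, rfl⟩
      exact ⟨d₀, hd₀, same_refl d₀⟩
    · rintro T ⟨d₀, hd₀, rfl⟩ T' ⟨d₀', hd₀', rfl⟩ hne
      rw [Set.disjoint_left]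
      rintro d ⟨hdD, hds⟩ ⟨hdD', hds'⟩
      apply hne
      ext w
      constructor
      · rintro ⟨hwD, hws⟩
        exact ⟨hwD, same_trans hws (same_trans (same_symm hds) hds')⟩
      · rintro ⟨hwD, hws⟩
        exact ⟨hwD, same_trans hws (same_trans (same_symm hds') hds)⟩
    · apply Set.eq_of_subset_of_subset
      · rintro d ⟨T, ⟨d₀, hd₀, rfl⟩, hd, _⟩
        exact hd
      · intro d hd
        exact ⟨{w ∈ D | same w d}, ⟨d, hd, rfl⟩, hd, same_refl d⟩
  have hpartof : ∀ (c : X) (d : Y), c ∈ C → d ∈ D → ∃ U ∈ P, (c, d) ∈ U :=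
    fun c d hc hd => hP.exists_mem (Set.mk_mem_prod hc hd)
  have hPccardfin : Pc.Finite ∧ Pc.ncard ≤ (n + 1) ^ K := by
    have key : ∀ T : ↥Pc, ∃ d₀, d₀ ∈ D ∧ T.1 = {d ∈ D | same d d₀} := by
      rintro ⟨T, d₀, hd₀, rfl⟩; exact ⟨d₀, hd₀, rfl⟩
    choose rep hrepD hrepT using key
    set prof : ↥Pc → (↥C → Option ↥P) := fun T c =>
      some ⟨(hpartof c.1 (rep T) c.2 (hrepD T)).choose,
        (hpartof c.1 (rep T) c.2 (hrepD T)).choose_spec.1⟩ with hprof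
    have hprofinj : Function.Injective prof := by
      intro T₁ T₂ he
      have hsame12 : same (rep T₁) (rep T₂) := by
        intro c hc U hU
        have h1 := (hpartof c (rep T₁) hc (hrepD T₁)).choose_spec
        have h2 := (hpartof c (rep T₂) hc (hrepD T₂)).choose_spec
        have : (⟨(hpartof c (rep T₁) hc (hrepD T₁)).choose, _⟩ : ↥P) =
            ⟨(hpartof c (rep T₂) hc (hrepD T₂)).choose, h2.1⟩ :=
          Option.some_injective _ (congrFun he ⟨c, hc⟩)
        have heq : (hpartof c (rep T₁) hc (hrepD T₁)).choose =
            (hpartof c (rep T₂) hc (hrepD T₂)).choose := congrArg Subtype.val this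
        constructor
        · intro hmem
          have hU1 : U = (hpartof c (rep T₁) hc (hrepD T₁)).choose := by
            by_contra hne
            exact Set.disjoint_left.mp (hP.2.1 U hU _ h1.1 hne) hmem h1.2
          rw [hU1, heq]; exact h2.2
        · intro hmem
          have hU2 : U = (hpartof c (rep T₂) hc (hrepD T₂)).choose := by
            by_contra hne
            exact Set.disjoint_left.mp (hP.2.1 U hU _ h2.1 hne) hmem h2.2
          rw [hU2, ← heq]; exact h1.2
      apply Subtype.ext
      rw [hrepT T₁, hrepT T₂]
      ext w
      exact ⟨fun ⟨hw, hs⟩ => ⟨hw, same_trans hs hsame12⟩,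
        fun ⟨hw, hs⟩ => ⟨hw, same_trans hs (same_symm hsame12)⟩⟩
    have hb := ncard_le_of_inj_to_finite prof hprofinj
    refine ⟨hb.1, hb.2.trans ?_⟩
    calc Nat.card (↥C → Option ↥P) = Nat.card (Option ↥P) ^ Nat.card ↥C := Nat.card_fun
      _ = (n + 1) ^ Nat.card ↥C := by
          rw [Finite.card_option, Nat.card_coe_set_eq]
      _ ≤ (n + 1) ^ K := Nat.pow_le_pow_right (Nat.succ_le_succ (Nat.zero_le n))
          (by rw [Nat.card_coe_set_eq]; exact hCcard)
  obtain ⟨Uc, hUcpart, hUcref, hUctuned, hUcfin, hUccard⟩ := hD Pc hPcpart hPccardfin.1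
  have hUccard' : Uc.ncard ≤ f ((n + 1) ^ K) := hUccard.trans (hf hPccardfin.2)
  set Q : Set (Set (X × Y)) := {q | ∃ U ∈ Uc, ∃ c ∈ C, q = ({c} : Set X) ×ˢ U} with hQdef
  refine ⟨Q, ?_, ?_, ?_, ?_⟩
  · refine ⟨?_, ?_, ?_⟩
    · rintro q ⟨U, hU, c, hc, rfl⟩
      obtain ⟨d, hd⟩ := hUcpart.1 U hU
      exact ⟨(c, d), rfl, hd⟩
    · rintro q ⟨U, hU, c, hc, rfl⟩ q' ⟨U', hU', c', hc', rfl⟩ hne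
      rw [Set.disjoint_left]
      rintro ⟨e, d⟩ ⟨he, hdU⟩ ⟨he', hdU'⟩
      simp only [Set.mem_singleton_iff] at he he'
      subst he
      have : U = U' := by
        by_contra hUne
        exact Set.disjoint_left.mp (hUcpart.2.1 U hU U' hU' hUne) hdU hdU'
      exact hne (by rw [this, he'])
    · apply Set.eq_of_subset_of_subset
      · rintro ⟨e, d⟩ ⟨q, ⟨U, hU, c, hc, rfl⟩, he, hdU⟩
        simp only [Set.mem_singleton_iff] at he
        exact ⟨he ▸ hc, hUcpart.subset hU hdU⟩
      · rintro ⟨e, d⟩ ⟨he, hd⟩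
        obtain ⟨U, hU, hdU⟩ := hUcpart.exists_mem hd
        exact ⟨{e} ×ˢ U, ⟨U, hU, e, he, rfl⟩, rfl, hdU⟩
  · rintro q ⟨U, hU, c, hc, rfl⟩
    obtain ⟨T, hT, hsub⟩ := hUcref U hU
    obtain ⟨d₀, hd₀, rfl⟩ := hT
    obtain ⟨U₀, hU₀, hd₀U₀⟩ := hpartof c d₀ hc hd₀
    refine ⟨U₀, hU₀, ?_⟩
    rintro ⟨e, d⟩ ⟨he, hdU⟩
    simp only [Set.mem_singleton_iff] at he
    rw [he]
    exact ((hsub hdU).2 c hc U₀ hU₀).mpr hd₀U₀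
  · intro ab q hq q' hq' hex p hp
    obtain ⟨U, hU, c, hc, rfl⟩ := hq
    obtain ⟨U', hU', c', hc', rfl⟩ := hq'
    obtain ⟨⟨e1, d1⟩, ⟨he1, hd1⟩, ⟨e2, d2⟩, ⟨he2, hd2⟩, hrel⟩ := hex
    obtain ⟨ew, w⟩ := p
    obtain ⟨hew, hwU⟩ := hp
    simp only [Set.mem_singleton_iff] at he1 he2 hew
    replace he1 : e1 = c := he1
    replace he2 : e2 = c' := he2
    replace hew : ew = c := hew
    cases ab with
    | inl a =>
      obtain ⟨hR12, hd12⟩ := hrel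
      replace hR12 : R a e1 e2 := hR12
      replace hd12 : d1 = d2 := hd12
      have hd1U' : d1 ∈ U' := by rw [hd12]; exact hd2
      have hUU' : U = U' := by
        by_contra hne
        exact Set.disjoint_left.mp (hUcpart.2.1 U hU U' hU' hne) hd1 hd1U'
      have hwU' : w ∈ U' := by rw [← hUU']; exact hwU
      refine ⟨(c', w), ⟨rfl, hwU'⟩, ?_, rfl⟩
      show R a ew c'
      rw [hew, ← he1, ← he2]
      exact hR12
    | inr b =>
      obtain ⟨hc12, hS12⟩ := hrel
      replace hc12 : e1 = e2 := hc12
      replace hS12 : S b d1 d2 := hS12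
      obtain ⟨d3, hd3, hS3⟩ := hUctuned b U hU U' hU' ⟨d1, hd1, d2, hd2, hS12⟩ w hwU
      refine ⟨(c', d3), ⟨rfl, hd3⟩, ?_, hS3⟩
      show ew = c'
      rw [hew, ← he1, hc12]
      exact he2
  · have key : ∀ q : ↥Q, ∃ (U : ↥Uc) (c : ↥C), q.1 = ({c.1} : Set X) ×ˢ U.1 := by
      rintro ⟨q, U, hU, c, hc, rfl⟩; exact ⟨⟨U, hU⟩, ⟨c, hc⟩, rfl⟩
    choose qU qc hqUc using key
    haveI hfinU : Finite ↥Uc := hUcfin.to_subtype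
    have hb := ncard_le_of_inj_to_finite (s := Q) (fun q => (qU q, qc q)) ?_
    · refine ⟨hb.1, hb.2.trans ?_⟩
      rw [Nat.card_prod]
      apply Nat.mul_le_mul
      · rw [Nat.card_coe_set_eq]; exact hUccard'
      · rw [Nat.card_coe_set_eq]; exact hCcard
    · intro q₁ q₂ he
      have h1 : qU q₁ = qU q₂ := congrArg Prod.fst he
      have h2 : qc q₁ = qc q₂ := congrArg Prod.snd he
      apply Subtype.ext
      rw [hqUc q₁, hqUc q₂, h1, h2]

end L2

section L3
open Set Relation
variable {A B X Y : Type*} {R : A → X → X → Prop} {S : B → Y → Y → Prop}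

lemma lift_h {x x' : X} (h : ReflTransGen (unionRel R) x x') (y : Y) :
    ReflTransGen (unionRel (prodRel R S)) (x, y) (x', y) := by
  induction h with
  | refl => exact ReflTransGen.refl
  | tail hb hs ih =>
    obtain ⟨a, ha⟩ := hs
    exact ih.tail ⟨Sum.inl a, ha, rfl⟩

lemma lift_v {y y' : Y} (h : ReflTransGen (unionRel S) y y') (x : X) :
    ReflTransGen (unionRel (prodRel R S)) (x, y) (x, y') := by
  induction h with
  | refl => exact ReflTransGen.refl
  | tail hb hs ih =>
    obtain ⟨b, hb'⟩ := hs
    exact ih.tail ⟨Sum.inr b, rfl, hb'⟩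

lemma proj_h {p q : X × Y} (h : ReflTransGen (unionRel (prodRel R S)) p q) :
    ReflTransGen (unionRel R) p.1 q.1 := by
  induction h with
  | refl => exact ReflTransGen.refl
  | tail hb hs ih =>
    obtain ⟨ab, hab⟩ := hs
    cases ab with
    | inl a => exact ih.tail ⟨a, hab.1⟩
    | inr b => exact hab.1 ▸ ih

lemma proj_v {p q : X × Y} (h : ReflTransGen (unionRel (prodRel R S)) p q) :
    ReflTransGen (unionRel S) p.2 q.2 := by
  induction h with
  | refl => exact ReflTransGen.refl
  | tail hb hs ih =>
    obtain ⟨ab, hab⟩ := hs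
    cases ab with
    | inl a => exact hab.2 ▸ ih
    | inr b => exact ih.tail ⟨b, hab.2⟩

lemma cluster_prod (x : X) (y : Y) :
    clusterOf (unionRel (prodRel R S)) (x, y) =
      (clusterOf (unionRel R) x) ×ˢ (clusterOf (unionRel S) y) := by
  ext ⟨x', y'⟩
  constructor
  · rintro ⟨hf, hb⟩
    exact ⟨⟨proj_h hf, proj_h hb⟩, ⟨proj_v hf, proj_v hb⟩⟩
  · rintro ⟨⟨hx1, hx2⟩, hy1, hy2⟩
    exact ⟨(lift_h hx1 y).trans (lift_v hy1 x'), (lift_v hy2 x').trans (lift_h hx2 y)⟩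

lemma big_set {α : Type*} {s : Set α} {k : ℕ} (h : ¬ (s.Finite ∧ s.ncard ≤ k)) :
    ∃ c : Fin (k + 1) → α, Function.Injective c ∧ ∀ i, c i ∈ s := by
  by_cases hfin : s.Finite
  · have hk : k + 1 ≤ s.ncard := by
      by_contra hc
      exact h ⟨hfin, by omega⟩
    obtain ⟨t, hts, htcard⟩ := Set.exists_subset_card_eq hk
    haveI := (hfin.subset hts).fintype
    have hcard : Fintype.card (Fin (k + 1)) ≤ Fintype.card ↥t := by
      rw [Fintype.card_fin, ← Nat.card_eq_fintype_card, Nat.card_coe_set_eq, htcard]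
    obtain ⟨e⟩ := Function.Embedding.nonempty_of_card_le hcard
    exact ⟨fun i => (e i).1, fun i j hij => e.injective (Subtype.ext hij),
      fun i => hts (e i).2⟩
  · have hinf : s.Infinite := hfin
    set e := hinf.natEmbedding with he
    exact ⟨fun i => (e i.1).1, fun i j hij => Fin.ext (by
        have := e.injective (Subtype.ext hij); simpa using congrArg id this),
      fun i => (e i.1).2⟩

lemma small_cluster {m : ℕ}
    (hRP : RP (fun p q : X × Y =>
      (ReflTransGen (unionRel R) p.1 q.1 ∧ p.2 = q.2) ∨
        (p.1 = q.1 ∧ ReflTransGen (unionRel S) p.2 q.2)) m) (x : X) (y : Y) :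
    ((clusterOf (unionRel R) x).Finite ∧ (clusterOf (unionRel R) x).ncard ≤ m + 1) ∨
    ((clusterOf (unionRel S) y).Finite ∧ (clusterOf (unionRel S) y).ncard ≤ m + 1) := by
  by_contra hcon
  push_neg at hcon
  obtain ⟨hC, hD⟩ := hcon
  obtain ⟨c, hcinj, hcmem⟩ := big_set (s := clusterOf (unionRel R) x) (k := m + 1)
    (fun hh => by have h1 := hC hh.1; have h2 := hh.2; omega)
  obtain ⟨d, hdinj, hdmem⟩ := big_set (s := clusterOf (unionRel S) y) (k := m + 1)
    (fun hh => by have h1 := hD hh.1; have h2 := hh.2; omega)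
  set cc : ℕ → X := fun i => c ⟨min i (m + 1), Nat.lt_succ_of_le (Nat.min_le_right i (m + 1))⟩ with hcc
  set dd : ℕ → Y := fun i => d ⟨min i (m + 1), Nat.lt_succ_of_le (Nat.min_le_right i (m + 1))⟩ with hdd
  have hccinj : ∀ i j, i ≤ m + 1 → j ≤ m + 1 → cc i = cc j → i = j := by
    intro i j hi hj hee
    have := hcinj hee
    have := congrArg Fin.val this
    simp only [Fin.val_mk] at this  -- min i (m+1) = min j (m+1)
    omega
  have hddinj : ∀ i j, i ≤ m + 1 → j ≤ m + 1 → dd i = dd j → i = j := by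
    intro i j hi hj hee
    have := hdinj hee
    have := congrArg Fin.val this
    simp only [Fin.val_mk] at this
    omega
  have hccl : ∀ i j, ReflTransGen (unionRel R) (cc i) (cc j) := by
    intro i j
    exact ((hcmem _).2).trans ((hcmem _).1)
  have hddl : ∀ i j, ReflTransGen (unionRel S) (dd i) (dd j) := by
    intro i j
    exact ((hdmem _).2).trans ((hdmem _).1)
  set p : ℕ → X × Y := fun i => (cc ((i + 1) / 2), dd (i / 2)) with hp
  have hpath : ∀ i, i ≤ m → (fun p q : X × Y =>
      (ReflTransGen (unionRel R) p.1 q.1 ∧ p.2 = q.2) ∨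
        (p.1 = q.1 ∧ ReflTransGen (unionRel S) p.2 q.2)) (p i) (p (i + 1)) := by
    intro i hi
    rcases Nat.even_or_odd i with ⟨t, ht⟩ | ⟨t, ht⟩
    · left
      constructor
      · exact hccl _ _
      · show dd (i / 2) = dd ((i + 1) / 2)
        congr 1
        omega
    · right
      constructor
      · show cc ((i + 1) / 2) = cc ((i + 1 + 1) / 2)
        congr 1
        omega
      · exact hddl _ _
  rcases hRP p hpath with ⟨i, j, hij, hjle, heq⟩ | ⟨i, j, hij, hjle, hT⟩
  · have h1 : cc ((i + 1) / 2) = cc ((j + 1) / 2) := congrArg Prod.fst heq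
    have h2 : dd (i / 2) = dd (j / 2) := congrArg Prod.snd heq
    have e1 := hccinj _ _ (by omega) (by omega) h1
    have e2 := hddinj _ _ (by omega) (by omega) h2
    omega
  · rcases hT with ⟨hfst, hsnd⟩ | ⟨hfst, hsnd⟩
    · have : dd (i / 2) = dd ((j + 1) / 2) := hsnd
      have := hddinj _ _ (by omega) (by omega) this
      omega
    · have : cc ((i + 1) / 2) = cc ((j + 1 + 1) / 2) := hfst
      have := hccinj _ _ (by omega) (by omega) this
      omega

lemma rtc_of_chain_steps {α : Type*} {r' : α → α → Prop} {n : ℕ} {p : ℕ → α}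
    (hsteps : ∀ i, i + 1 < n → ReflTransGen r' (p i) (p (i + 1))) :
    ∀ i j, i ≤ j → j < n → ReflTransGen r' (p i) (p j) := by
  intro i j
  induction j with
  | zero =>
    intro hij _
    have h0 : i = 0 := Nat.le_zero.mp hij
    subst h0
    exact ReflTransGen.refl
  | succ j ih =>
    intro hij hjn
    by_cases hij' : i = j + 1
    · rw [hij']
    · exact (ih (by omega) (by omega)).trans (hsteps j (by omega))

lemma extract_chain {α : Type*} {r' : α → α → Prop} {L h : ℕ} (hh : 1 ≤ h) {u : ℕ → α}
    (hfwd : ∀ i j, i ≤ j → j ≤ L → ReflTransGen r' (u i) (u j))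
    (I : Finset ℕ) (hIL : ∀ i ∈ I, i < L) (hIcard : h ≤ I.card)
    (hIstrict : ∀ i ∈ I, ¬ ReflTransGen r' (u (i + 1)) (u i)) :
    ∃ q : ℕ → α, IsStrictChain (ReflTransGen r') (h + 1) q := by
  classical
  obtain ⟨J, hJI, hJcard⟩ := Finset.exists_subset_card_eq hIcard
  set emb := J.orderEmbOfFin hJcard with hemb
  have hmemJ : ∀ k : Fin h, (emb k : ℕ) ∈ I := fun k => hJI (J.orderEmbOfFin_mem hJcard k)
  have hembL : ∀ k : Fin h, (emb k : ℕ) < L := fun k => hIL _ (hmemJ k)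
  set q : ℕ → α := fun k =>
    if hk : k < h then u (emb ⟨k, hk⟩) else u (emb ⟨h - 1, by omega⟩ + 1) with hqdef
  refine ⟨q, ?_⟩
  intro k hk1
  have hkh : k < h := by omega
  have e0 : q k = u (emb ⟨k, hkh⟩) := dif_pos hkh
  rw [e0]
  by_cases hk2 : k + 1 < h
  · have e1 : q (k + 1) = u (emb ⟨k + 1, hk2⟩) := dif_pos hk2
    rw [e1]
    have hlt : emb ⟨k, hkh⟩ < emb ⟨k + 1, hk2⟩ := by
      apply emb.strictMono
      exact Fin.mk_lt_mk.mpr (by omega)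
    constructor
    · exact hfwd _ _ (le_of_lt hlt) (le_of_lt (hembL _))
    · intro hback
      apply hIstrict _ (hmemJ ⟨k, hkh⟩)
      exact (hfwd (emb ⟨k, hkh⟩ + 1) (emb ⟨k + 1, hk2⟩) (by omega)
        (le_of_lt (hembL _))).trans hback
  · have hfin : (⟨h - 1, by omega⟩ : Fin h) = ⟨k, hkh⟩ := Fin.ext (show h - 1 = k by omega)
    have e1 : q (k + 1) = u (emb ⟨k, hkh⟩ + 1) := by
      have : q (k + 1) = u (emb ⟨h - 1, by omega⟩ + 1) := dif_neg hk2
      rw [this, hfin]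
    rw [e1]
    constructor
    · exact hfwd _ _ (Nat.le_succ _) (by have := hembL ⟨k, hkh⟩; omega)
    · exact hIstrict _ (hmemJ ⟨k, hkh⟩)

lemma prod_height {h₁ h₂ : ℕ}
    (hh1 : HeightLe (unionRel R) h₁) (hh2 : HeightLe (unionRel S) h₂) :
    HeightLe (unionRel (prodRel R S)) (h₁ + h₂) := by
  classical
  intro p hchain
  -- nonemptiness
  have hX : X := (p 0).1
  have hY : Y := (p 0).2
  rcases Nat.eq_zero_or_pos h₁ with rfl | hpos1
  · exact hh1 (fun _ => hX) (fun i hi => by omega)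
  rcases Nat.eq_zero_or_pos h₂ with rfl | hpos2
  · exact hh2 (fun _ => hY) (fun i hi => by omega)
  set L := h₁ + h₂ with hL
  have hsteps : ∀ i, i + 1 < L + 1 → ReflTransGen (unionRel (prodRel R S)) (p i) (p (i + 1)) :=
    fun i hi => (hchain i hi).1
  have hstrict : ∀ i, i + 1 < L + 1 → ¬ ReflTransGen (unionRel (prodRel R S)) (p (i + 1)) (p i) :=
    fun i hi => (hchain i hi).2
  have hfwd : ∀ i j, i ≤ j → j ≤ L → ReflTransGen (unionRel (prodRel R S)) (p i) (p j) :=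
    fun i j hij hjL => rtc_of_chain_steps hsteps i j hij (by omega)
  have hdichot : ∀ i, i < L →
      (¬ ReflTransGen (unionRel R) (p (i + 1)).1 (p i).1) ∨
      (¬ ReflTransGen (unionRel S) (p (i + 1)).2 (p i).2) := by
    intro i hi
    by_contra hcon
    push_neg at hcon
    apply hstrict i (by omega)
    have l1 : ReflTransGen (unionRel (prodRel R S)) ((p (i+1)).1, (p (i+1)).2)
        ((p i).1, (p (i+1)).2) := lift_h hcon.1 _
    have l2 : ReflTransGen (unionRel (prodRel R S)) ((p i).1, (p (i+1)).2)
        ((p i).1, (p i).2) := lift_v hcon.2 _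
    have := l1.trans l2
    simpa using this
  set I := (Finset.range L).filter
    (fun i => ¬ ReflTransGen (unionRel R) (p (i + 1)).1 (p i).1) with hI
  by_cases hcard : h₁ ≤ I.card
  · obtain ⟨q, hq⟩ := extract_chain (u := fun i => (p i).1) hpos1
      (fun i j hij hjL => proj_h (hfwd i j hij hjL)) I
      (fun i hi => Finset.mem_range.mp (Finset.mem_filter.mp hi).1) hcard
      (fun i hi => (Finset.mem_filter.mp hi).2)
    exact hh1 q hq
  · set I' := (Finset.range L) \ I with hI'
    have hI'card : h₂ ≤ I'.card := by
      have h1 : I ⊆ Finset.range L := Finset.filter_subset _ _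
      have h2 : I'.card = L - I.card := by
        rw [hI', Finset.card_sdiff_of_subset h1, Finset.card_range]
      omega
    have hstr : ∀ i ∈ I', ¬ ReflTransGen (unionRel S) (p (i + 1)).2 (p i).2 := by
      intro i hi
      obtain ⟨hiL, hiI⟩ := Finset.mem_sdiff.mp hi
      have hiL' := Finset.mem_range.mp hiL
      rcases hdichot i hiL' with hF | hG
      · exact absurd (Finset.mem_filter.mpr ⟨hiL, hF⟩) hiI
      · exact hG
    obtain ⟨q, hq⟩ := extract_chain (u := fun i => (p i).2) hpos2
      (fun i j hij hjL => proj_v (hfwd i j hij hjL)) I'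
      (fun i hi => Finset.mem_range.mp (Finset.mem_sdiff.mp hi).1) hI'card hstr
    exact hh2 q hq

end L3

section Final
open Set Relation

lemma rtcW_univ {Z : Type*} (r : Z → Z → Prop) :
    rtcW Set.univ r = Relation.ReflTransGen r := by
  rw [rtcW, relOn_univ]

lemma clW_univ {Z : Type*} (r : Z → Z → Prop) (z : Z) :
    clW Set.univ r z = clusterOf r z := by
  ext z'
  show eclW Set.univ r z z' ↔ _
  rw [eclW, rtcW_univ]
  exact Iff.rfl

end Final
end Aux


/-- Reducible-path criterion, semantic form. -/
theorem stmt6 {A B : Type*} [Finite A] [Finite B] (h₁ h₂ : ℕ)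
    (f : ℕ → ℕ) (hf : Monotone f) (m : ℕ) :
    ∃ t : ℕ → ℕ, ∀ (X Y : Type u) [Nonempty X] [Nonempty Y]
      (R : A → X → X → Prop) (S : B → Y → Y → Prop),
      HeightLe (unionRel R) h₁ →
      HeightLe (unionRel S) h₂ →
      (∀ x : X, Tunable (fun a (p q : clusterOf (unionRel R) x) => R a p.1 q.1) f) →
      (∀ y : Y, Tunable (fun b (p q : clusterOf (unionRel S) y) => S b p.1 q.1) f) →
      RP (fun p q : X × Y =>
        (Relation.ReflTransGen (unionRel R) p.1 q.1 ∧ p.2 = q.2) ∨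
          (p.1 = q.1 ∧ Relation.ReflTransGen (unionRel S) p.2 q.2)) m →
      Tunable (prodRel R S) t := by
  set g : ℕ → ℕ := fun n => f ((n + 1) ^ (m + 1)) * (m + 1) with hgdef
  have hgmono : Monotone g := by
    intro a b hab
    apply Nat.mul_le_mul_right
    exact hf (Nat.pow_le_pow_left (by omega) _)
  obtain ⟨T, hTmono, hT⟩ := L1 (A' := A ⊕ B) g hgmono (h₁ + h₂)
  refine ⟨T, ?_⟩
  intro X Y _ _ R S hH1 hH2 htun1 htun2 hRP
  rw [tunable_iff_tunableOn_univ]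
  apply hT (X × Y) (prodRel R S) Set.univ
  · -- height of the product
    intro x _ hchain
    rw [rtcW_univ] at hchain
    exact prod_height hH1 hH2 x hchain
  · -- clusters of the product are tunable
    rintro ⟨x, y⟩ -
    rw [clW_univ, cluster_prod x y]
    rcases small_cluster hRP x y with ⟨hfin, hcard⟩ | ⟨hfin, hcard⟩
    · have hD : TunableOn (clusterOf (unionRel S) y) S f :=
        tunableOn_of_subtype _ _ _ (htun2 y)
      exact prod_tunable_left R S _ _ f hf (m + 1) hfin hcard hD
    · have hC : TunableOn (clusterOf (unionRel R) x) R f :=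
        tunableOn_of_subtype _ _ _ (htun1 x)
      exact prod_tunable_right R S _ _ f hf (m + 1) hfin hcard hC
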